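/- Let u > 1 be a real quadratic unit of norm 1 (so u ≥ (3+√5)/2). Then for every n ≥ 1, |N_{K/ℚ}(Φ_n(u))| > u^{φ(n)} · e^{-1.55724}, where φ is Euler's totient function. -/

import Mathlib

set_option maxHeartbeats 1000000


open NumberField Polynomial Finset

local notation "μμ" => ArithmeticFunction.moebius

/-- A ring hom commutes with `aeval` of an integer polynomial. -/
lemma hom_aeval_int {A B : Type*} [CommRing A] [CommRing B] (f : A →+* B) (a : A)
    (p : ℤ[X]) : f (aeval a p) = aeval (f a) p := by
  rw [aeval_def, aeval_def, Polynomial.hom_eval₂]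
  congr 1
  exact RingHom.ext_int _ _

lemma zpow_finset_sum {ι : Type*} {x : ℝ} (hx : x ≠ 0) (s : Finset ι) (e : ι → ℤ) :
    x ^ (∑ i ∈ s, e i) = ∏ i ∈ s, x ^ e i := by
  classical
  induction s using Finset.cons_induction with
  | empty => simp
  | cons a s ha ih => rw [Finset.sum_cons, Finset.prod_cons, zpow_add₀ hx, ih]

lemma one_sub_sum_le_prod_one_sub {ι : Type*} (s : Finset ι) (f : ι → ℝ)
    (h0 : ∀ i ∈ s, 0 ≤ f i) (h1 : ∀ i ∈ s, f i ≤ 1) :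
    1 - ∑ i ∈ s, f i ≤ ∏ i ∈ s, (1 - f i) := by
  classical
  induction s using Finset.cons_induction with
  | empty => simp
  | cons a s ha ih =>
    rw [Finset.sum_cons, Finset.prod_cons]
    have ih' := ih (fun i hi => h0 i (Finset.mem_cons_of_mem hi))
      (fun i hi => h1 i (Finset.mem_cons_of_mem hi))
    have hs0 : 0 ≤ ∑ i ∈ s, f i := Finset.sum_nonneg (fun i hi => h0 i (Finset.mem_cons_of_mem hi))
    have ha0 : 0 ≤ f a := h0 a (Finset.mem_cons_self a s)
    have ha1 : f a ≤ 1 := h1 a (Finset.mem_cons_self a s)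
    nlinarith [ih', hs0, ha0, ha1]

/-- Möbius product expression for the evaluated cyclotomic polynomial. -/
lemma cyclotomic_eval_moebius {x : ℝ} (hx0 : 0 < x) (hx1 : x ≠ 1) {n : ℕ} (hn : 0 < n) :
    eval x (cyclotomic n ℝ) = ∏ d ∈ n.divisors, (x ^ d - 1) ^ (μμ (n / d) : ℤ) := by
  have hf : ∀ m : ℕ, 0 < m → eval x (cyclotomic m ℝ) ≠ 0 := by
    intro m hm
    rcases lt_or_ge m 3 with h3 | h3
    · interval_cases m
      · simp [cyclotomic_one]; intro h; exact hx1 (by linarith)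
      · simp [cyclotomic_two]; positivity
    · exact (cyclotomic_pos (by omega) x).ne'
  have hg : ∀ m : ℕ, 0 < m → (x ^ m - 1 : ℝ) ≠ 0 := by
    intro m hm
    rcases lt_or_gt_of_ne (hx1) with h | h
    · have : x ^ m < 1 := pow_lt_one₀ hx0.le h hm.ne'
      linarith
    · have : 1 < x ^ m := one_lt_pow₀ h hm.ne'
      linarith
  have hmain := (ArithmeticFunction.prod_eq_iff_prod_pow_moebius_eq_of_nonzero (R := ℝ)
      (f := fun m => eval x (cyclotomic m ℝ)) (g := fun m => x ^ m - 1) hf hg).1 ?_ n hn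
  · rw [← hmain]
    exact Nat.prod_divisorsAntidiagonal' (fun a b => ((x : ℝ) ^ b - 1) ^ (μμ a : ℤ))
  · intro m hm
    have := prod_cyclotomic_eq_X_pow_sub_one hm ℝ
    calc ∏ i ∈ m.divisors, eval x (cyclotomic i ℝ)
        = eval x (∏ i ∈ m.divisors, cyclotomic i ℝ) := by rw [eval_prod]
      _ = x ^ m - 1 := by rw [this]; simp

lemma totient_eq_sum_moebius {n : ℕ} (hn : 0 < n) :
    (n.totient : ℤ) = ∑ d ∈ n.divisors, (μμ (n / d) : ℤ) * d := by
  have hmain := (ArithmeticFunction.sum_eq_iff_sum_mul_moebius_eq (R := ℤ)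
      (f := fun m => (m.totient : ℤ)) (g := fun m => (m : ℤ))).1 ?_ n hn
  · rw [← hmain]
    exact Nat.sum_divisorsAntidiagonal' (fun a b => (μμ a : ℤ) * b)
  · intro m hm
    rw [← Nat.cast_sum]
    exact_mod_cast congrArg (Nat.cast (R := ℤ)) (Nat.sum_totient m)

/-- Factoring out `v ^ φ(n)` from the cyclotomic value. -/
lemma cyclotomic_eval_eq_totient_mul {v : ℝ} (hv : 1 < v) {n : ℕ} (hn : 0 < n) :
    eval v (cyclotomic n ℝ) =
      v ^ n.totient * ∏ d ∈ n.divisors, (1 - v⁻¹ ^ d) ^ (μμ (n / d) : ℤ) := by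
  have hv0 : (0:ℝ) < v := by linarith
  have hsplit : ∀ d ∈ n.divisors, (v ^ d - 1 : ℝ) ^ (μμ (n / d) : ℤ) =
      (v ^ d : ℝ) ^ (μμ (n / d) : ℤ) * (1 - v⁻¹ ^ d) ^ (μμ (n / d) : ℤ) := by
    intro d hd
    rw [← mul_zpow]
    congr 1
    field_simp
    rw [one_div, inv_pow, mul_sub, mul_one, mul_inv_cancel₀ (pow_pos hv0 d).ne']
  rw [cyclotomic_eval_moebius hv0 hv.ne' hn, Finset.prod_congr rfl hsplit,
    Finset.prod_mul_distrib]
  congr 1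
  have : ∀ d ∈ n.divisors, ((v:ℝ) ^ d) ^ (μμ (n / d) : ℤ) = v ^ ((μμ (n / d) : ℤ) * d) := by
    intro d hd
    rw [← zpow_natCast v d, ← zpow_mul, mul_comm]
  rw [Finset.prod_congr rfl this, ← zpow_finset_sum hv0.ne', ← totient_eq_sum_moebius hn,
    zpow_natCast]

/-- Key lower bound on the Möbius product. -/
lemma moebius_prod_ge {q : ℝ} (hq0 : 0 < q) (hq : q ≤ 0.382) {n : ℕ} (hn : 0 < n) :
    (0.472 : ℝ) ≤ ∏ d ∈ n.divisors, (1 - q ^ d) ^ (μμ (n / d) : ℤ) := by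
  have hq1 : q < 1 := by linarith
  have hfac : ∀ d ∈ n.divisors, (0:ℝ) < 1 - q ^ d ∧ q ^ d ≤ q := by
    intro d hd
    have hd1 : 1 ≤ d := Nat.pos_of_mem_divisors hd
    have h1 : q ^ d ≤ q := by
      calc q ^ d ≤ q ^ 1 := pow_le_pow_of_le_one hq0.le hq1.le hd1
        _ = q := pow_one q
    exact ⟨by nlinarith, h1⟩
  have step1 : ∏ d ∈ n.divisors, (1 - q ^ d) ≤
      ∏ d ∈ n.divisors, (1 - q ^ d) ^ (μμ (n / d) : ℤ) := by
    apply Finset.prod_le_prod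
    · intro d hd; exact (hfac d hd).1.le
    · intro d hd
      obtain ⟨hpos, hle⟩ := hfac d hd
      have hle1 : (1 - q ^ d : ℝ) ≤ 1 := by
        have := pow_nonneg hq0.le d; linarith
      have hinv : (1:ℝ) ≤ (1 - q ^ d)⁻¹ := by
        nlinarith [mul_inv_cancel₀ hpos.ne', inv_pos.2 hpos]
      have habs := abs_le.mp (ArithmeticFunction.abs_moebius_le_one (n := n / d))
      have : μμ (n / d) = -1 ∨ μμ (n / d) = 0 ∨ μμ (n / d) = 1 := by omega
      rcases this with h | h | h <;> rw [h]
      · rw [zpow_neg_one]; linarith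
      · rw [zpow_zero]; linarith
      · rw [zpow_one]
  have h1mem : 1 ∈ n.divisors := Nat.one_mem_divisors.2 hn.ne'
  have step2 : ∏ d ∈ n.divisors, (1 - q ^ d) =
      (1 - q) * ∏ d ∈ n.divisors.erase 1, (1 - q ^ d) := by
    rw [← Finset.mul_prod_erase _ _ h1mem, pow_one]
  have hsub : n.divisors.erase 1 ⊆ Finset.Ico 2 (n+1) := by
    intro d hd
    have hd' := Finset.mem_of_mem_erase hd
    have h1 : d ≠ 1 := Finset.ne_of_mem_erase hd
    have h2 : 1 ≤ d := Nat.pos_of_mem_divisors hd'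
    have h3 : d ≤ n := Nat.divisor_le hd'
    simp only [Finset.mem_Ico]
    omega
  have hsum : ∑ d ∈ n.divisors.erase 1, q ^ d ≤ q ^ 2 * (1 - q)⁻¹ := by
    have hle : ∑ d ∈ n.divisors.erase 1, q ^ d ≤ ∑ d ∈ Finset.Ico 2 (n+1), q ^ d :=
      Finset.sum_le_sum_of_subset_of_nonneg hsub (fun i _ _ => by positivity)
    have heq : ∑ d ∈ Finset.Ico 2 (n+1), q ^ d = q ^ 2 * ∑ i ∈ Finset.range (n-1), q ^ i := by
      rw [Finset.sum_Ico_eq_sum_range, Finset.mul_sum]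
      rw [show n + 1 - 2 = n - 1 from by omega]
      apply Finset.sum_congr rfl
      intro i _
      rw [← pow_add]
    have hgeom : ∑ i ∈ Finset.range (n-1), q ^ i ≤ (1 - q)⁻¹ := by
      have h1q : (0:ℝ) < 1 - q := by linarith
      rw [geom_sum_eq hq1.ne]
      have heq2 : (q ^ (n-1) - 1) / (q - 1) = (1 - q ^ (n-1)) / (1 - q) := by
        rw [← neg_div_neg_eq]; ring_nf
      rw [heq2, div_le_iff₀ h1q, inv_mul_cancel₀ h1q.ne']
      have := pow_nonneg hq0.le (n-1)
      linarith
    calc ∑ d ∈ n.divisors.erase 1, q ^ d ≤ q ^ 2 * ∑ i ∈ Finset.range (n-1), q ^ i := by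
          rw [← heq]; exact hle
      _ ≤ q ^ 2 * (1 - q)⁻¹ := by
          apply mul_le_mul_of_nonneg_left hgeom (by positivity)
  have h1q : (0:ℝ) < 1 - q := by linarith
  have hprod_tail : 1 - ∑ d ∈ n.divisors.erase 1, q ^ d ≤
      ∏ d ∈ n.divisors.erase 1, (1 - q ^ d) := by
    apply one_sub_sum_le_prod_one_sub
    · intro d hd; positivity
    · intro d hd
      obtain ⟨hpos, hle'⟩ := hfac d (Finset.mem_of_mem_erase hd)
      linarith
  have hkey : (0.472 : ℝ) ≤ (1 - q) * (1 - q ^ 2 * (1 - q)⁻¹) := by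
    have hx : (1 - q) * (1 - q ^ 2 * (1 - q)⁻¹) = 1 - q - q ^ 2 := by
      field_simp
    rw [hx]
    nlinarith [mul_nonneg (by linarith : (0:ℝ) ≤ 0.382 - q) (by linarith : (0:ℝ) ≤ q + 1.382)]
  calc (0.472 : ℝ) ≤ (1 - q) * (1 - q ^ 2 * (1 - q)⁻¹) := hkey
    _ ≤ (1 - q) * (1 - ∑ d ∈ n.divisors.erase 1, q ^ d) := by
        apply mul_le_mul_of_nonneg_left (by linarith) h1q.le
    _ ≤ (1 - q) * ∏ d ∈ n.divisors.erase 1, (1 - q ^ d) := by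
        apply mul_le_mul_of_nonneg_left hprod_tail h1q.le
    _ = ∏ d ∈ n.divisors, (1 - q ^ d) := step2.symm
    _ ≤ ∏ d ∈ n.divisors, (1 - q ^ d) ^ (μμ (n / d) : ℤ) := step1

lemma exp_neg_const_lt : Real.exp (-1.55724) < 0.2223 := by
  have h1 : ((1:ℝ) + 1.55724/64) ^ (64:ℕ) ≤ Real.exp 1.55724 := by
    calc ((1:ℝ) + 1.55724/64) ^ (64:ℕ) ≤ (Real.exp (1.55724/64)) ^ (64:ℕ) := by
          apply pow_le_pow_left₀ (by norm_num)
          have := Real.add_one_le_exp (1.55724/64 : ℝ)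
          linarith
      _ = Real.exp 1.55724 := by
          rw [← Real.exp_nat_mul]
          norm_num
  have h2 : (4.5:ℝ) < ((1:ℝ) + 1.55724/64) ^ (64:ℕ) := by norm_num
  have h3 : (4.5:ℝ) < Real.exp 1.55724 := lt_of_lt_of_le h2 h1
  rw [show (-1.55724 : ℝ) = -(1.55724) from by norm_num, Real.exp_neg]
  rw [inv_lt_comm₀ (by positivity) (by norm_num)]
  calc (0.2223:ℝ)⁻¹ < 4.5 := by norm_num
    _ < Real.exp 1.55724 := h3

/-- For a real quadratic unit `u > 1` of norm `1`, for every `n ≥ 1`,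
`|N(Φ_n(u))| > u^{φ(n)} · e^{-1.55724}`. -/
theorem norm_cyclotomic_lower_bound_norm_one (K : Type*) [Field K] [NumberField K]
    (hdeg : Module.finrank ℚ K = 2) (σ : K →+* ℝ)
    (u : (RingOfIntegers K)ˣ) (hu : 1 < σ (((u : RingOfIntegers K) : K)))
    (hnorm : Algebra.norm ℤ ((u : RingOfIntegers K)) = 1)
    (n : ℕ) (hn : 1 ≤ n) :
    ((|Algebra.norm ℤ (aeval (u : RingOfIntegers K) (cyclotomic n ℤ))| : ℤ) : ℝ) >
      (σ (((u : RingOfIntegers K) : K))) ^ n.totient * Real.exp (-1.55724) := by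
  classical
  have hn0 : 0 < n := hn
  -- embeddings setup
  have hcard : Fintype.card (K →ₐ[ℚ] ℂ) = 2 := by
    rw [AlgHom.card]; exact hdeg
  set φ₀ : K →ₐ[ℚ] ℂ := (Complex.ofRealHom.comp σ).toRatAlgHom with hφ₀
  obtain ⟨ψ, hψ⟩ : ∃ ψ : K →ₐ[ℚ] ℂ, ψ ≠ φ₀ :=
    Fintype.exists_ne_of_one_lt_card (by omega) φ₀
  have huniv : (Finset.univ : Finset (K →ₐ[ℚ] ℂ)) = {φ₀, ψ} := by
    symm
    apply Finset.eq_univ_of_card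
    rw [Finset.card_insert_of_notMem (Finset.notMem_singleton.mpr hψ.symm),
      Finset.card_singleton, hcard]
  have hnormQ : ∀ x : K, ((Algebra.norm ℚ x : ℚ) : ℂ) = φ₀ x * ψ x := by
    intro x
    have h := Algebra.norm_eq_prod_embeddings (K := ℚ) (L := K) (E := ℂ) x
    rw [huniv] at h
    rw [show ((Algebra.norm ℚ x : ℚ) : ℂ) = algebraMap ℚ ℂ (Algebra.norm ℚ x) from
      (eq_ratCast (algebraMap ℚ ℂ) _).symm, h,
      Finset.prod_insert (Finset.notMem_singleton.mpr hψ.symm), Finset.prod_singleton]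
  have hNC : ∀ x : RingOfIntegers K,
      ((Algebra.norm ℤ x : ℤ) : ℂ) = φ₀ (x : K) * ψ (x : K) := by
    intro x
    have h1 : ((Algebra.norm ℤ x : ℤ) : ℂ) = (((Algebra.norm ℤ x : ℤ) : ℚ) : ℂ) := by
      push_cast; ring
    rw [h1, Algebra.coe_norm_int, hnormQ]
  set v : ℝ := σ ((u : RingOfIntegers K) : K) with hvdef
  have hv : 1 < v := hu
  have hv0 : (0:ℝ) < v := by linarith
  have hφval : ∀ x : K, φ₀ x = ((σ x : ℝ) : ℂ) := fun x => rfl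
  -- u * u⁻¹ = 1 in K
  have hmulinv : (((u⁻¹ : (RingOfIntegers K)ˣ) : RingOfIntegers K) : K) *
      ((u : RingOfIntegers K) : K) = 1 := by
    have h0 : ((((u⁻¹ : (RingOfIntegers K)ˣ) : RingOfIntegers K) *
        (u : RingOfIntegers K) : RingOfIntegers K) : K) = ((1 : RingOfIntegers K) : K) :=
      congrArg _ u.inv_mul
    simpa using h0
  have hσinv : σ (((u⁻¹ : (RingOfIntegers K)ˣ) : RingOfIntegers K) : K) = v⁻¹ := by
    have h := congrArg σ hmulinv
    rw [map_mul, map_one] at h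
    have h2 : (σ (((u⁻¹ : (RingOfIntegers K)ˣ) : RingOfIntegers K) : K) * v) * v⁻¹ = 1 * v⁻¹ := by
      rw [← h]
    simpa [mul_assoc, mul_inv_cancel₀ hv0.ne'] using h2
  -- ψ values
  have hψu : ψ ((u : RingOfIntegers K) : K) = ((v : ℂ))⁻¹ := by
    have h := hNC (u : RingOfIntegers K)
    rw [hnorm] at h
    have h' : (v : ℂ) * ψ ((u : RingOfIntegers K) : K) = 1 := by
      rw [← hφval]; exact_mod_cast h.symm
    exact (inv_eq_of_mul_eq_one_right h').symm
  have hψinv : ψ (((u⁻¹ : (RingOfIntegers K)ˣ) : RingOfIntegers K) : K) = (v : ℂ) := by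
    have h := congrArg ψ hmulinv
    rw [map_mul, map_one, hψu] at h
    have hvne : (v : ℂ) ≠ 0 := by
      simp only [ne_eq, Complex.ofReal_eq_zero]; linarith
    have h2 : (ψ (((u⁻¹ : (RingOfIntegers K)ˣ) : RingOfIntegers K) : K) * ((v:ℂ))⁻¹) * (v:ℂ)
        = 1 * (v:ℂ) := by rw [h]
    simpa [mul_assoc, inv_mul_cancel₀ hvne] using h2
  -- trace argument : v + v⁻¹ ≥ 3
  set s : RingOfIntegers K := (u : RingOfIntegers K) +
    ((u⁻¹ : (RingOfIntegers K)ˣ) : RingOfIntegers K) - 2 with hsdef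
  have hsK : ((s : RingOfIntegers K) : K) = ((u : RingOfIntegers K) : K) +
      (((u⁻¹ : (RingOfIntegers K)ˣ) : RingOfIntegers K) : K) - 2 := by
    push_cast [hsdef, map_ofNat]
    ring
  set m : ℤ := Algebra.norm ℤ s with hmdef
  have hmC : (m : ℂ) = (((v + v⁻¹ - 2) * (v⁻¹ + v - 2) : ℝ) : ℂ) := by
    rw [hmdef, hNC s, hsK]
    rw [map_sub, map_add, map_sub, map_add, hψu, hψinv]
    simp only [map_ofNat, hφval, hσinv]
    push_cast
    ring
  have hmR : (m : ℝ) = (v + v⁻¹ - 2) ^ 2 := by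
    have : ((m : ℝ) : ℂ) = (((v + v⁻¹ - 2) * (v⁻¹ + v - 2) : ℝ) : ℂ) := by
      push_cast
      push_cast at hmC
      exact hmC
    have h2 := Complex.ofReal_injective this
    rw [h2]; ring
  have hvv : v * v⁻¹ = 1 := mul_inv_cancel₀ hv0.ne'
  have hapos : 0 < v + v⁻¹ - 2 := by
    have h1 : (0:ℝ) < (v - 1) ^ 2 := by
      have hne : v - 1 ≠ 0 := by linarith
      positivity
    nlinarith [hvv]
  have hm1 : 1 ≤ m := by
    have h0 : (0:ℝ) < (m : ℝ) := by
      rw [hmR]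
      positivity
    have h1 : (0:ℤ) < m := by exact_mod_cast h0
    omega
  have hv3 : 3 ≤ v + v⁻¹ := by
    have h2 : (1:ℝ) ≤ (v + v⁻¹ - 2) ^ 2 := by
      rw [← hmR]; exact_mod_cast hm1
    nlinarith [hapos]
  -- q bounds
  set q : ℝ := v⁻¹ with hqdef
  have hq0 : 0 < q := by positivity
  have hvq : v * q = 1 := hvv
  have hq1 : q < 1 := by nlinarith
  have hq' : 3 * q ≤ q ^ 2 + 1 := by nlinarith [hv3, hvq, sq_nonneg q, mul_pos hq0 hq0]
  have hq382 : q ≤ 0.382 := by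
    by_contra h
    push_neg at h
    nlinarith [mul_pos (by linarith : (0:ℝ) < q - 0.382) (by nlinarith : (0:ℝ) < 2.618 - q)]
  -- cyclotomic value computation
  set y : RingOfIntegers K := aeval (u : RingOfIntegers K) (cyclotomic n ℤ) with hydef
  set N : ℤ := Algebra.norm ℤ y with hNdef
  have haevalR : ∀ r : ℝ, aeval r (cyclotomic n ℤ) = eval r (cyclotomic n ℝ) := by
    intro r
    rw [aeval_def, eval₂_eq_eval_map, map_cyclotomic]
  set A : ℝ := eval v (cyclotomic n ℝ) with hAdef
  set B : ℝ := eval q (cyclotomic n ℝ) with hBdef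
  have hyK : ((y : RingOfIntegers K) : K) =
      aeval ((u : RingOfIntegers K) : K) (cyclotomic n ℤ) := by
    rw [hydef, RingOfIntegers.coe_eq_algebraMap]
    exact hom_aeval_int (algebraMap (RingOfIntegers K) K) _ _
  have hNC' : (N : ℂ) = ((A * B : ℝ) : ℂ) := by
    rw [hNdef, hNC y, hyK]
    have e1 : φ₀ (aeval ((u : RingOfIntegers K) : K) (cyclotomic n ℤ)) =
        aeval ((((v:ℝ)) : ℂ)) (cyclotomic n ℤ) := by
      have := hom_aeval_int (φ₀ : K →+* ℂ) ((u : RingOfIntegers K) : K) (cyclotomic n ℤ)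
      exact this
    have e2 : ψ (aeval ((u : RingOfIntegers K) : K) (cyclotomic n ℤ)) =
        aeval ((((q:ℝ)) : ℂ)) (cyclotomic n ℤ) := by
      have h2 := hom_aeval_int (ψ : K →+* ℂ) ((u : RingOfIntegers K) : K) (cyclotomic n ℤ)
      have h3 : ψ ((u : RingOfIntegers K) : K) = (((q:ℝ)) : ℂ) := by
        rw [hψu, hqdef]
        push_cast
        ring
      rw [← h3]
      exact h2
    have e3 : (aeval (((v:ℝ)) : ℂ) (cyclotomic n ℤ)) = ((A : ℝ) : ℂ) := by
      have h4 := hom_aeval_int Complex.ofRealHom v (cyclotomic n ℤ)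
      rw [haevalR v] at h4
      exact h4.symm
    have e4 : (aeval (((q:ℝ)) : ℂ) (cyclotomic n ℤ)) = ((B : ℝ) : ℂ) := by
      have h4 := hom_aeval_int Complex.ofRealHom q (cyclotomic n ℤ)
      rw [haevalR q] at h4
      exact h4.symm
    rw [e1, e2, e3, e4]
    push_cast
    ring
  have hNR : (N : ℝ) = A * B := by
    have : ((N : ℝ) : ℂ) = ((A * B : ℝ) : ℂ) := by
      push_cast
      push_cast at hNC'
      exact hNC'
    exact Complex.ofReal_injective this
  -- the Möbius product
  set P : ℝ := ∏ d ∈ n.divisors, (1 - q ^ d) ^ (μμ (n / d) : ℤ) with hPdef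
  have hA : A = v ^ n.totient * P := cyclotomic_eval_eq_totient_mul hv hn0
  have hB : |B| = P := by
    rw [hBdef, cyclotomic_eval_moebius hq0 hq1.ne hn0, Finset.abs_prod, hPdef]
    apply Finset.prod_congr rfl
    intro d hd
    have hd1 : 0 < d := Nat.pos_of_mem_divisors hd
    have hqd : q ^ d < 1 := pow_lt_one₀ hq0.le hq1 hd1.ne'
    rw [show |(q ^ d - 1 : ℝ) ^ (μμ (n / d) : ℤ)| = |q ^ d - 1| ^ (μμ (n / d) : ℤ) from
      map_zpow₀ (absHom : ℝ →*₀ ℝ) _ _]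
    rw [abs_of_neg (by linarith : (q ^ d - 1 : ℝ) < 0), neg_sub]
  have hP : (0.472 : ℝ) ≤ P := moebius_prod_ge hq0 hq382 hn0
  have hApos : 0 < A := cyclotomic_pos' n hv
  -- final computation
  have habs : ((|N| : ℤ) : ℝ) = v ^ n.totient * P ^ 2 := by
    rw [Int.cast_abs, hNR, abs_mul, abs_of_pos hApos, hB, hA]
    ring
  rw [habs]
  apply mul_lt_mul_of_pos_left _ (pow_pos hv0 _)
  calc Real.exp (-1.55724) < 0.2223 := exp_neg_const_lt
    _ < 0.472 ^ 2 := by norm_num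
    _ ≤ P ^ 2 := by nlinarith [hP]
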